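/- arXiv:2603.02822 — 3 statements merged into one kernel-verified Lean document; each statement's English description precedes it below -/
import Mathlib

section
/- If T is a near-isometry on a Hilbert space H and M is a closed subspace reducing T (i.e., M and its orthogonal complement are both invariant under T), then the restriction of T to M is a near-isometry on M. -/
open ContinuousLinearMap

/-- A bounded operator `T` on a complex Hilbert space is a *near-isometry* if
(i) there is `δ > 0` with `δ‖x‖ ≤ ‖Tx‖ ≤ ‖x‖` for all `x`, and
(ii) for each `n ≥ 0`, `T*ⁿ Tⁿ⁺¹ H ⊆ T H`. -/
def IsNearIsometry {H : Type*} [NormedAddCommGroup H] [InnerProductSpace ℂ H]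
    [CompleteSpace H] (T : H →L[ℂ] H) : Prop :=
  (∃ δ > (0 : ℝ), ∀ x : H, δ * ‖x‖ ≤ ‖T x‖ ∧ ‖T x‖ ≤ ‖x‖) ∧
  ∀ n : ℕ, ∀ x : H, ∃ y : H, ((adjoint T) ^ n) ((T ^ (n + 1)) x) = T y

theorem stmt0 {H : Type*} [NormedAddCommGroup H] [InnerProductSpace ℂ H] [CompleteSpace H]
    (T : H →L[ℂ] H) (hT : IsNearIsometry T)
    (M : Submodule ℂ H) [CompleteSpace M]
    (hM : ∀ x ∈ M, T x ∈ M) (hM' : ∀ x ∈ Mᗮ, T x ∈ Mᗮ)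
    (S : M →L[ℂ] M) (hS : ∀ x : M, (S x : H) = T x) :
    IsNearIsometry S := by
  obtain ⟨⟨δ, hδ, hδ'⟩, hrange⟩ := hT
  -- T* preserves M
  have hTadj : ∀ x ∈ M, adjoint T x ∈ M := by
    intro x hx
    rw [← Submodule.orthogonal_orthogonal M]
    intro z hz
    rw [ContinuousLinearMap.adjoint_inner_right]
    exact (Submodule.mem_orthogonal' M _).mp (hM' z hz) x hx
  -- powers of S coerce to powers of T
  have hSpow : ∀ n : ℕ, ∀ x : M, ((S ^ n) x : H) = (T ^ n) x := by
    intro n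
    induction n with
    | zero => intro x; simp
    | succ k ih =>
      intro x
      rw [pow_succ, pow_succ, ContinuousLinearMap.mul_apply,
        ContinuousLinearMap.mul_apply, ih, hS]
  -- adjoint of S coerces to adjoint of T
  have hSadj : ∀ x : M, ((adjoint S) x : H) = adjoint T x := by
    intro x
    have h1 : ((adjoint S) x : H) - adjoint T (x : H) ∈ M :=
      Submodule.sub_mem M ((adjoint S) x).2 (hTadj x x.2)
    have h2 : ∀ y : M, inner ℂ (((adjoint S) x : H) - adjoint T (x : H)) (y : H) = (0 : ℂ) := by
      intro y
      rw [inner_sub_left, ContinuousLinearMap.adjoint_inner_left]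
      have : (inner ℂ ((adjoint S) x) y : ℂ) = inner ℂ (x : H) (T y) := by
        rw [ContinuousLinearMap.adjoint_inner_left, Submodule.coe_inner, hS]
      rw [← Submodule.coe_inner, this, sub_eq_zero]
    exact sub_eq_zero.mp (inner_self_eq_zero.mp (h2 ⟨_, h1⟩))
  have hSadjpow : ∀ n : ℕ, ∀ x : M, (((adjoint S) ^ n) x : H) = ((adjoint T) ^ n) x := by
    intro n
    induction n with
    | zero => intro x; simp
    | succ k ih =>
      intro x
      rw [pow_succ', pow_succ', ContinuousLinearMap.mul_apply,
        ContinuousLinearMap.mul_apply, hSadj, ih]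
  constructor
  · refine ⟨δ, hδ, fun x => ?_⟩
    have h := hδ' (x : H)
    have hnx : ‖x‖ = ‖(x : H)‖ := rfl
    have hnSx : ‖S x‖ = ‖(S x : H)‖ := rfl
    rw [hnx, hnSx, hS]
    exact h
  · intro n x
    obtain ⟨y, hy⟩ := hrange n (x : H)
    -- T y ∈ M
    have hTadjpow : ∀ k : ℕ, ∀ z ∈ M, ((adjoint T) ^ k) z ∈ M := by
      intro k
      induction k with
      | zero => intro z hz; simpa using hz
      | succ j ih =>
        intro z hz
        rw [pow_succ, ContinuousLinearMap.mul_apply]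
        exact ih _ (hTadj z hz)
    have hTpow : ∀ k : ℕ, ∀ z ∈ M, ((T ^ k)) z ∈ M := by
      intro k
      induction k with
      | zero => intro z hz; simpa using hz
      | succ j ih =>
        intro z hz
        rw [pow_succ', ContinuousLinearMap.mul_apply]
        exact hM _ (ih z hz)
    have hTyM : T y ∈ M := by
      rw [← hy]; exact hTadjpow n _ (hTpow (n + 1) _ x.2)
    -- decompose y
    set p : M := M.orthogonalProjectionOnto y with hp
    have hq : y - (p : H) ∈ Mᗮ := M.sub_starProjection_mem_orthogonal y
    have hTq : T (y - (p : H)) ∈ Mᗮ := hM' _ hq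
    have hTqM : T (y - (p : H)) ∈ M := by
      have : T (y - (p : H)) = T y - T (p : H) := map_sub T _ _
      rw [this]
      exact Submodule.sub_mem M hTyM (hM _ p.2)
    have hTq0 : T (y - (p : H)) = 0 := by
      have := (Submodule.orthogonal_disjoint M).le_bot (Submodule.mem_inf.mpr ⟨hTqM, hTq⟩)
      simpa using this
    have hTyp : T y = T (p : H) := by
      have : T y - T (p : H) = 0 := by rw [← map_sub]; exact hTq0
      exact sub_eq_zero.mp this
    refine ⟨p, Subtype.ext ?_⟩
    rw [hS, hSadjpow, hSpow, hy, hTyp]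
end

section
/- Let T be a bounded operator on a Hilbert space H. Condition T*^n T^(n+1) H ⊆ T H for all n ≥ 0 is equivalent to the condition T^n(ker T*) ⊥ T^(n+1) H for all n ≥ 0, provided T is bounded below (so that T H is closed). -/
open ContinuousLinearMap

/-- For a bounded-below operator `T` on a Hilbert space, the condition
`T*ⁿ Tⁿ⁺¹ H ⊆ T H` for all `n ≥ 0` is equivalent to the condition
`Tⁿ(ker T*) ⊥ Tⁿ⁺¹ H` for all `n ≥ 0`. -/
theorem stmt1 {H : Type*} [NormedAddCommGroup H] [InnerProductSpace ℂ H] [CompleteSpace H]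
    (T : H →L[ℂ] H) (δ : ℝ) (hδ : 0 < δ) (hlow : ∀ x : H, δ * ‖x‖ ≤ ‖T x‖) :
    (∀ n : ℕ, ∀ x : H, ∃ y : H, ((adjoint T) ^ n) ((T ^ (n + 1)) x) = T y) ↔
    (∀ n : ℕ, ∀ x ∈ LinearMap.ker (adjoint T : H →ₗ[ℂ] H), ∀ y : H,
      (inner ℂ ((T ^ n) x) ((T ^ (n + 1)) y) : ℂ) = 0) := by
  have hpow : ∀ n : ℕ, (adjoint T) ^ n = adjoint (T ^ n) := by
    intro n
    rw [← star_eq_adjoint, ← star_eq_adjoint, star_pow]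
  constructor
  · intro h n x hx y
    obtain ⟨z, hz⟩ := h n y
    have h1 : (inner ℂ ((T ^ n) x) ((T ^ (n + 1)) y) : ℂ)
        = inner ℂ x (((adjoint T) ^ n) ((T ^ (n + 1)) y)) := by
      rw [hpow, adjoint_inner_right]
    rw [h1, hz, ← adjoint_inner_left]
    rw [show (adjoint T) x = 0 from LinearMap.mem_ker.mp hx, inner_zero_left]
  · intro h n x
    set w := ((adjoint T) ^ n) ((T ^ (n + 1)) x) with hw
    have hanti : AntilipschitzWith (⟨δ, hδ.le⟩ : NNReal)⁻¹ T := by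
      apply T.antilipschitz_of_bound
      intro y
      change ‖y‖ ≤ δ⁻¹ * ‖T y‖
      rw [inv_mul_eq_div, le_div_iff₀ hδ, mul_comm]
      exact hlow y
    have hclosed : (LinearMap.range (T : H →ₗ[ℂ] H)).topologicalClosure = LinearMap.range (T : H →ₗ[ℂ] H) :=
      closed_range_of_antilipschitz hanti
    haveI : CompleteSpace (LinearMap.range (T : H →ₗ[ℂ] H)) := hanti.completeSpace_range_clm
    have horth : (LinearMap.range (T : H →ₗ[ℂ] H))ᗮᗮ = LinearMap.range (T : H →ₗ[ℂ] H) :=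
      Submodule.orthogonal_orthogonal _
    have hmem : w ∈ (LinearMap.range (T : H →ₗ[ℂ] H))ᗮᗮ := by
      rw [Submodule.mem_orthogonal]
      intro v hv
      have hker : v ∈ LinearMap.ker (adjoint T : H →ₗ[ℂ] H) := by
        rw [LinearMap.mem_ker]
        have h0 : (inner ℂ (T ((adjoint T) v)) v : ℂ) = 0 :=
          hv _ (LinearMap.mem_range_self _ _)
        have h1 : (inner ℂ ((adjoint T) v) ((adjoint T) v) : ℂ) = 0 := by
          rw [← adjoint_inner_left, adjoint_adjoint]
          exact h0
        exact inner_self_eq_zero.mp h1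
      have h2 : (inner ℂ v w : ℂ) = inner ℂ ((T ^ n) v) ((T ^ (n + 1)) x) := by
        rw [hw, hpow, adjoint_inner_right]
      rw [h2]
      exact h n v hker x
    rw [horth] at hmem
    obtain ⟨y, hy⟩ := hmem
    exact ⟨y, hy.symm⟩
end

section
/- The multiplication operator M_z by the coordinate function z on the Bergman space over the unit disc is a near-isometry: it is a bounded-below contraction and for every n ≥ 0, M_z^n applied to ker(M_z^*) is orthogonal to M_z^(n+1) applied to the Bergman space. -/
set_option linter.unusedSectionVars false
open ContinuousLinearMap

section Aux

variable {B : Type*} [NormedAddCommGroup B] [InnerProductSpace ℂ B] [CompleteSpace B]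

private lemma basis_ext (e : HilbertBasis ℕ ℂ B) {u v : B}
    (h : ∀ i, (inner ℂ (e i) u : ℂ) = inner ℂ (e i) v) : u = v := by
  apply e.repr.injective
  apply lp.ext
  funext i
  rw [e.repr_apply_apply, e.repr_apply_apply, h]

private lemma normsq_eq (e : HilbertBasis ℕ ℂ B) (u : B) :
    ‖u‖^2 = ∑' i, ‖(inner ℂ (e i) u : ℂ)‖^2 := by
  have h1 : ‖u‖ = ‖e.repr u‖ := (e.repr.norm_map u).symm
  have h2 := lp.norm_rpow_eq_tsum (p := 2) (by norm_num) (e.repr u)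
  simp only [ENNReal.toReal_ofNat] at h2
  rw [h1]
  calc ‖e.repr u‖^2 = ‖e.repr u‖ ^ (2:ℝ) := by rw [← Real.rpow_natCast]; norm_num
  _ = ∑' i, ‖e.repr u i‖ ^ (2:ℝ) := h2
  _ = ∑' i, ‖(inner ℂ (e i) u : ℂ)‖^2 := by
      congr 1; funext i; rw [e.repr_apply_apply, ← Real.rpow_natCast]; norm_num

private lemma summable_normsq (e : HilbertBasis ℕ ℂ B) (u : B) :
    Summable fun i => ‖(inner ℂ (e i) u : ℂ)‖^2 := by
  have := (lp.memℓp (e.repr u)).summable (p := 2) (by norm_num)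
  simp only [ENNReal.toReal_ofNat] at this
  convert this using 2 with i
  rw [e.repr_apply_apply, ← Real.rpow_natCast]; norm_num

end Aux

set_option maxHeartbeats 1000000 in
/-- The Bergman shift is a near-isometry.  We model the Bergman space abstractly:
`B` is a complex Hilbert space with orthonormal basis `e n` (corresponding to the
normalized monomials `√(n+1) zⁿ`), and `Mz` is the bounded operator of
multiplication by `z`, which acts on the basis by
`Mz (√(n+1) zⁿ) = √((n+1)/(n+2)) · √(n+2) zⁿ⁺¹`.  Then `Mz` is a bounded-below
contraction and `Mzⁿ(ker Mz*) ⊥ Mzⁿ⁺¹ B` for every `n ≥ 0`. -/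
theorem stmt2 {B : Type*} [NormedAddCommGroup B] [InnerProductSpace ℂ B] [CompleteSpace B]
    (e : HilbertBasis ℕ ℂ B) (Mz : B →L[ℂ] B)
    (hMz : ∀ n : ℕ, Mz (e n) = ((Real.sqrt (((n : ℝ) + 1) / ((n : ℝ) + 2)) : ℝ) : ℂ) • e (n + 1)) :
    (∃ δ > (0 : ℝ), ∀ f : B, δ * ‖f‖ ≤ ‖Mz f‖ ∧ ‖Mz f‖ ≤ ‖f‖) ∧
    (∀ n : ℕ, ∀ x ∈ LinearMap.ker ((adjoint Mz : B →L[ℂ] B) : B →ₗ[ℂ] B), ∀ y : B,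
      (inner ℂ ((Mz ^ n) x) ((Mz ^ (n + 1)) y) : ℂ) = 0) := by
  set w : ℕ → ℝ := fun n => Real.sqrt (((n : ℝ) + 1) / ((n : ℝ) + 2)) with hw
  have hwpos : ∀ n, 0 < w n := fun n => Real.sqrt_pos.2 (by positivity)
  have hwsq : ∀ n, (w n)^2 = ((n : ℝ) + 1) / ((n : ℝ) + 2) := fun n =>
    Real.sq_sqrt (by positivity)
  have hinner : ∀ i j : ℕ, (inner ℂ (e i) (e j) : ℂ) = if i = j then 1 else 0 :=
    orthonormal_iff_ite.mp e.orthonormal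
  -- adjoint on basis vectors
  have hadj0 : adjoint Mz (e 0) = 0 := by
    apply basis_ext e
    intro i
    rw [adjoint_inner_right, hMz, inner_smul_left, hinner]
    simp
  have hadjS : ∀ k, adjoint Mz (e (k + 1)) = ((w k : ℝ) : ℂ) • e k := by
    intro k
    apply basis_ext e
    intro i
    rw [adjoint_inner_right, hMz, inner_smul_left, hinner, inner_smul_right, hinner]
    rcases eq_or_ne i k with rfl | h
    · simp [Complex.conj_ofReal, hw]
    · simp [h, fun hc => h (Nat.succ_injective hc)]
  constructor
  · -- bounded below contraction
    refine ⟨(Real.sqrt 2)⁻¹, by positivity, fun f => ?_⟩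
    -- coefficients of Mz f
    have hc0 : (inner ℂ (e 0) (Mz f) : ℂ) = 0 := by
      rw [← adjoint_inner_left, hadj0, inner_zero_left]
    have hcS : ∀ k, (inner ℂ (e (k+1)) (Mz f) : ℂ) = (w k : ℂ) * inner ℂ (e k) f := by
      intro k
      rw [← adjoint_inner_left, hadjS, inner_smul_left, Complex.conj_ofReal]
    have hSb := summable_normsq e (Mz f)
    have hSa := summable_normsq e f
    have hSb' : Summable fun k => ‖(inner ℂ (e (k+1)) (Mz f) : ℂ)‖^2 :=
      (summable_nat_add_iff 1).2 hSb
    have hterm : ∀ k, ‖(inner ℂ (e (k+1)) (Mz f) : ℂ)‖^2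
        = (w k)^2 * ‖(inner ℂ (e k) f : ℂ)‖^2 := by
      intro k
      rw [hcS, norm_mul, mul_pow, Complex.norm_real, Real.norm_eq_abs,
        sq_abs]
    have hMzf : ‖Mz f‖^2 = ∑' k, (w k)^2 * ‖(inner ℂ (e k) f : ℂ)‖^2 := by
      rw [normsq_eq e (Mz f), Summable.tsum_eq_zero_add hSb, hc0]
      simp only [norm_zero, zero_pow, ne_eq, OfNat.ofNat_ne_zero, not_false_eq_true, zero_add]
      exact tsum_congr hterm
    have hSc : Summable fun k => (w k)^2 * ‖(inner ℂ (e k) f : ℂ)‖^2 := by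
      refine hSb'.congr fun k => (hterm k)
    have hupper : ‖Mz f‖^2 ≤ ‖f‖^2 := by
      rw [hMzf, normsq_eq e f]
      refine Summable.tsum_le_tsum (fun k => ?_) hSc hSa
      have h1 : (w k)^2 ≤ 1 := by
        rw [hwsq]
        rw [div_le_one (by positivity)]
        linarith
      nlinarith [sq_nonneg ‖(inner ℂ (e k) f : ℂ)‖]
    have hlower : ‖f‖^2 ≤ 2 * ‖Mz f‖^2 := by
      rw [hMzf, normsq_eq e f, ← tsum_mul_left]
      refine Summable.tsum_le_tsum (fun k => ?_) hSa (hSc.mul_left 2)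
      have h1 : (1:ℝ)/2 ≤ (w k)^2 := by
        rw [hwsq, le_div_iff₀ (by positivity)]
        linarith
      nlinarith [sq_nonneg ‖(inner ℂ (e k) f : ℂ)‖]
    constructor
    · have h2 : ‖f‖ ≤ Real.sqrt 2 * ‖Mz f‖ := by
        have := Real.sqrt_le_sqrt hlower
        rwa [Real.sqrt_sq (norm_nonneg f), Real.sqrt_mul (by norm_num),
          Real.sqrt_sq (norm_nonneg _)] at this
      rw [inv_mul_le_iff₀ (by positivity)]
      linarith
    · have := Real.sqrt_le_sqrt hupper
      rwa [Real.sqrt_sq (norm_nonneg _), Real.sqrt_sq (norm_nonneg _)] at this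
  · -- orthogonality
    intro n x hx y
    have hx' : adjoint Mz x = 0 := hx
    -- x is a multiple of e 0
    have hxcoef : ∀ k, (inner ℂ (e (k+1)) x : ℂ) = 0 := by
      intro k
      have h0 : (inner ℂ (e k) (adjoint Mz x) : ℂ) = 0 := by rw [hx', inner_zero_right]
      rw [adjoint_inner_right, hMz, inner_smul_left] at h0
      have hwne : (starRingEnd ℂ) ((w k : ℝ) : ℂ) ≠ 0 := by
        simp [Complex.conj_ofReal, (hwpos k).ne']
      exact (mul_eq_zero.mp h0).resolve_left hwne
    have hxeq : x = (inner ℂ (e 0) x : ℂ) • e 0 := by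
      apply basis_ext e
      intro i
      rw [inner_smul_right, hinner]
      cases i with
      | zero => simp
      | succ k => simp [hxcoef k]
    -- Mz^n (e 0) is a multiple of e n
    have hpow : ∀ m : ℕ, ∃ c : ℂ, (Mz ^ m) (e 0) = c • e m := by
      intro m
      induction m with
      | zero => exact ⟨1, by simp⟩
      | succ k ih =>
        obtain ⟨c, hc⟩ := ih
        refine ⟨c * (w k : ℂ), ?_⟩
        rw [pow_succ', ContinuousLinearMap.mul_apply, hc, map_smul, hMz, smul_smul]
    -- (adjoint Mz)^(m+1) (e m) = 0
    have hadjpow : ∀ m : ℕ, ((adjoint Mz) ^ (m+1)) (e m) = 0 := by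
      intro m
      induction m with
      | zero => simpa using hadj0
      | succ k ih =>
        rw [pow_succ, ContinuousLinearMap.mul_apply, hadjS, map_smul, ih, smul_zero]
    obtain ⟨c, hc⟩ := hpow n
    calc (inner ℂ ((Mz ^ n) x) ((Mz ^ (n + 1)) y) : ℂ)
        = inner ℂ (adjoint (Mz ^ (n+1)) ((Mz ^ n) x)) y := (adjoint_inner_left _ _ _).symm
      _ = 0 := by
          rw [← star_eq_adjoint, star_pow, star_eq_adjoint]
          rw [hxeq, map_smul, hc, map_smul, map_smul, hadjpow, smul_zero, smul_zero,
            inner_zero_left]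
end
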